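/- arXiv:1001.0439 — 3 statements merged into one kernel-verified Lean document; each statement's English description precedes it below -/
import Mathlib

section
/- Let T > 0 and let f : ℝ → ℝ be càdlàg and of bounded variation on [0,T] with Δf(s) > −1 for every s ∈ (0,T]. Then for every t ∈ [0,T] the family ((1 + Δf(s)) e^{−Δf(s)})_{s ∈ (0,t]} is multipliable with product lying in (0,1]; consequently the Stieltjes exponential satisfies 𝔈(f)(t) ≤ e^{f(t)}. -/
open Set Filter

/-- The jump of `f` at `s`: `f s` minus the left limit of `f` at `s`. -/
noncomputable def jumpAt (f : ℝ → ℝ) (s : ℝ) : ℝ := f s - Function.leftLim f s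

/-- `f` is càdlàg on `[0,T]`: right-continuous at each point of `[0,T]` and
possessing left limits at each point of `(0,T]`. -/
def CadlagOn (f : ℝ → ℝ) (T : ℝ) : Prop :=
  (∀ t ∈ Set.Icc (0 : ℝ) T, ContinuousWithinAt f (Set.Ici t) t) ∧
  (∀ s ∈ Set.Ioc (0 : ℝ) T,
    Filter.Tendsto f (nhdsWithin s (Set.Iio s)) (nhds (Function.leftLim f s)))

/-- The Stieltjes exponential `𝔈(f)(t) = e^{f t} ∏_{0<s≤t} (1 + Δf s) e^{-Δf s}`. -/
noncomputable def stieltjesExp (f : ℝ → ℝ) (t : ℝ) : ℝ :=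
  Real.exp (f t) *
    ∏' s : Set.Ioc (0 : ℝ) t, (1 + jumpAt f s) * Real.exp (-(jumpAt f s))

/-- A single jump is bounded by the variation on `[a, s]`. -/
lemma jump_edist_le (f : ℝ → ℝ) {a s : ℝ} (has : a < s)
    (hls : Filter.Tendsto f (nhdsWithin s (Set.Iio s)) (nhds (Function.leftLim f s))) :
    edist (f s) (Function.leftLim f s) ≤ eVariationOn f (Set.Icc a s) := by
  have h1 : Filter.Tendsto (fun u => edist (f s) (f u)) (nhdsWithin s (Set.Iio s))
      (nhds (edist (f s) (Function.leftLim f s))) :=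
    Filter.Tendsto.edist tendsto_const_nhds hls
  have hne : (nhdsWithin s (Set.Iio s)).NeBot := nhdsLT_neBot s
  refine le_of_tendsto h1 ?_
  filter_upwards [Ioo_mem_nhdsLT has] with u hu
  exact eVariationOn.edist_le f ⟨has.le, le_refl s⟩ ⟨hu.1.le, hu.2.le⟩

/-- Sum of jumps over a finite set is bounded by the total variation. -/
lemma sum_jump_edist_le (f : ℝ → ℝ) (T : ℝ)
    (hls : ∀ s ∈ Set.Ioc (0 : ℝ) T,
      Filter.Tendsto f (nhdsWithin s (Set.Iio s)) (nhds (Function.leftLim f s))) :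
    ∀ (S : Finset ℝ), ∀ a t : ℝ, 0 ≤ a → t ≤ T → a ≤ t → (∀ s ∈ S, a < s ∧ s ≤ t) →
      (∑ s ∈ S, edist (f s) (Function.leftLim f s)) ≤ eVariationOn f (Set.Icc a t) := by
  intro S
  induction S using Finset.induction_on_max with
  | empty => intro a t _ _ _ _; simp
  | insert m S hmax ih =>
    intro a t ha htT hat hmem
    have hm := hmem m (Finset.mem_insert_self m S)
    have hSmem : ∀ s ∈ S, a < s ∧ s ≤ t := fun s hs =>
      hmem s (Finset.mem_insert_of_mem hs)
    have hmnotin : m ∉ S := fun h => lt_irrefl m (hmax m h)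
    rw [Finset.sum_insert hmnotin]
    have hjm : edist (f m) (Function.leftLim f m) ≤ eVariationOn f (Set.Icc a t) →
        True := fun _ => trivial
    rcases S.eq_empty_or_nonempty with rfl | hSne
    · simp only [Finset.sum_empty, add_zero]
      refine le_trans (jump_edist_le f hm.1 (hls m ⟨lt_of_le_of_lt ha hm.1, hm.2.trans htT⟩)) ?_
      exact eVariationOn.mono f (Set.Icc_subset_Icc le_rfl hm.2)
    · set b := S.max' hSne with hb
      have hbS : b ∈ S := S.max'_mem hSne
      have hab : a < b := (hSmem b hbS).1
      have hbm : b < m := hmax b hbS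
      have hSb : ∀ s ∈ S, a < s ∧ s ≤ b := fun s hs =>
        ⟨(hSmem s hs).1, S.le_max' s hs⟩
      have h1 : (∑ s ∈ S, edist (f s) (Function.leftLim f s)) ≤
          eVariationOn f (Set.Icc a b) :=
        ih a b ha ((hSmem b hbS).2.trans htT) hab.le hSb
      have h2 : edist (f m) (Function.leftLim f m) ≤ eVariationOn f (Set.Icc b m) :=
        jump_edist_le f hbm (hls m ⟨lt_of_le_of_lt ha hm.1, hm.2.trans htT⟩)
      calc edist (f m) (Function.leftLim f m) + ∑ s ∈ S, edist (f s) (Function.leftLim f s)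
          ≤ eVariationOn f (Set.Icc b m) + eVariationOn f (Set.Icc a b) :=
            add_le_add h2 h1
        _ = eVariationOn f (Set.Icc a b) + eVariationOn f (Set.Icc b m) := add_comm _ _
        _ = eVariationOn f (Set.Icc a m) := by
            have := eVariationOn.Icc_add_Icc f (s := Set.univ) hab.le hbm.le (Set.mem_univ b)
            simpa using this
        _ ≤ eVariationOn f (Set.Icc a t) :=
            eVariationOn.mono f (Set.Icc_subset_Icc le_rfl hm.2)

lemma log_one_add_sub_self_abs_le {y : ℝ} (hy : -1 < y) (hy2 : |y| ≤ 1/2) :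
    |Real.log (1 + y) - y| ≤ |y| := by
  have h1 : 0 < 1 + y := by linarith
  have hub : Real.log (1 + y) ≤ y := by
    have := Real.log_le_sub_one_of_pos h1; linarith
  have hlb : 1 - (1 + y)⁻¹ ≤ Real.log (1 + y) := Real.one_sub_inv_le_log_of_pos h1
  rw [abs_sub_comm, abs_of_nonneg (by linarith)]
  have heq : y - (1 - (1 + y)⁻¹) = y ^ 2 / (1 + y) := by field_simp; ring
  have h2 : y - Real.log (1 + y) ≤ y ^ 2 / (1 + y) := by linarith [heq ▸ sub_le_sub_left hlb y]
  refine h2.trans ?_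
  rw [div_le_iff₀ h1]
  nlinarith [sq_abs y, neg_abs_le y, abs_nonneg y]

/-- For `f` càdlàg of bounded variation on `[0,T]` with all jumps `> -1`,
for every `t ∈ [0,T]` the family `((1 + Δf s) e^{-Δf s})_{s ∈ (0,t]}` is multipliable with
product in `(0,1]`; consequently `𝔈(f)(t) ≤ e^{f t}`. -/
theorem stieltjesExp_le_exp
    (T : ℝ) (hT : 0 < T) (f : ℝ → ℝ)
    (hc : CadlagOn f T) (hBV : BoundedVariationOn f (Set.Icc (0 : ℝ) T))
    (hjump : ∀ s ∈ Set.Ioc (0 : ℝ) T, -1 < jumpAt f s) :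
    ∀ t ∈ Set.Icc (0 : ℝ) T,
      Multipliable
        (fun s : Set.Ioc (0 : ℝ) t => (1 + jumpAt f s) * Real.exp (-(jumpAt f s))) ∧
      (∏' s : Set.Ioc (0 : ℝ) t, (1 + jumpAt f s) * Real.exp (-(jumpAt f s))) ∈
        Set.Ioc (0 : ℝ) 1 ∧
      stieltjesExp f t ≤ Real.exp (f t) := by
  intro t ht
  obtain ⟨ht0, htT⟩ := ht
  set x : Set.Ioc (0 : ℝ) t → ℝ := fun s => jumpAt f s.val with hxdef
  have hx1 : ∀ s : Set.Ioc (0 : ℝ) t, -1 < x s := fun s =>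
    hjump s.val ⟨s.2.1, s.2.2.trans htT⟩
  have h1x : ∀ s : Set.Ioc (0 : ℝ) t, 0 < 1 + x s := fun s => by
    have := hx1 s; linarith
  -- summability of the absolute jumps, from bounded variation
  have hsum_abs : Summable (fun s : Set.Ioc (0 : ℝ) t => |x s|) := by
    refine summable_of_sum_le (c := (eVariationOn f (Set.Icc 0 T)).toReal)
      (fun s => abs_nonneg _) (fun u => ?_)
    set S : Finset ℝ := u.image Subtype.val with hS
    have hmem : ∀ s ∈ S, (0 : ℝ) < s ∧ s ≤ t := by
      intro s hs
      simp only [hS, Finset.mem_image] at hs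
      obtain ⟨a, _, rfl⟩ := hs
      exact ⟨a.2.1, a.2.2⟩
    have hkey : (∑ s ∈ S, edist (f s) (Function.leftLim f s)) ≤
        eVariationOn f (Set.Icc 0 t) :=
      sum_jump_edist_le f T hc.2 S 0 t le_rfl htT ht0 hmem
    have hkey2 : (∑ s ∈ S, edist (f s) (Function.leftLim f s)) ≤
        eVariationOn f (Set.Icc 0 T) :=
      hkey.trans (eVariationOn.mono f (Set.Icc_subset_Icc le_rfl htT))
    have hofReal : ENNReal.ofReal (∑ s ∈ u, |x s|) =
        ∑ s ∈ S, edist (f s) (Function.leftLim f s) := by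
      rw [ENNReal.ofReal_sum_of_nonneg (fun s _ => abs_nonneg _)]
      rw [hS, Finset.sum_image (fun a _ b _ h => Subtype.ext h)]
      refine Finset.sum_congr rfl (fun s _ => ?_)
      rw [edist_dist, Real.dist_eq]
      rfl
    rw [← ENNReal.ofReal_le_iff_le_toReal hBV, hofReal]
    exact hkey2
  -- the logarithms of the factors
  set g : Set.Ioc (0 : ℝ) t → ℝ := fun s => Real.log (1 + x s) - x s with hgdef
  have hgle : ∀ s, g s ≤ 0 := by
    intro s
    have := Real.log_le_sub_one_of_pos (h1x s)
    simp only [hgdef]; linarith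
  have hgsum : Summable g := by
    refine Summable.of_norm_bounded_eventually (g := fun s => |x s|) hsum_abs ?_
    have hx0 : Filter.Tendsto (fun s => |x s|) Filter.cofinite (nhds 0) :=
      hsum_abs.tendsto_cofinite_zero
    filter_upwards [hx0.eventually (gt_mem_nhds (by norm_num : (0:ℝ) < 1/2))] with s hs
    have : |x s| ≤ 1/2 := le_of_lt hs
    simpa [Real.norm_eq_abs] using log_one_add_sub_self_abs_le (hx1 s) this
  -- the factors are exponentials of g
  have hfact : (fun s : Set.Ioc (0 : ℝ) t =>
      (1 + jumpAt f s.val) * Real.exp (-(jumpAt f s.val))) = fun s => Real.exp (g s) := by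
    funext s
    rw [hgdef]
    simp only
    rw [Real.exp_sub, Real.exp_log (h1x s), Real.exp_neg, div_eq_mul_inv]
  have hprod : HasProd (fun s => Real.exp (g s)) (Real.exp (∑' s, g s)) := by
    have h : Filter.Tendsto (Real.exp ∘ fun F : Finset (Set.Ioc (0:ℝ) t) => ∑ i ∈ F, g i)
        Filter.atTop (nhds (Real.exp (∑' s, g s))) :=
      (Real.continuous_exp.tendsto _).comp hgsum.hasSum
    unfold HasProd
    convert h using 1
    funext F
    simp [Function.comp, Real.exp_sum]
    exact SummationFilter.unconditional_filter _
  have hmult : Multipliable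
      (fun s : Set.Ioc (0 : ℝ) t => (1 + jumpAt f s.val) * Real.exp (-(jumpAt f s.val))) := by
    rw [hfact]; exact hprod.multipliable
  have htprod : (∏' s : Set.Ioc (0 : ℝ) t,
      (1 + jumpAt f s.val) * Real.exp (-(jumpAt f s.val))) = Real.exp (∑' s, g s) := by
    rw [hfact]; exact hprod.tprod_eq
  have hsumle : (∑' s, g s) ≤ 0 := tsum_nonpos hgle
  refine ⟨hmult, ⟨?_, ?_⟩, ?_⟩
  · rw [htprod]; exact Real.exp_pos _
  · rw [htprod]; exact Real.exp_le_one_iff.2 hsumle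
  · unfold stieltjesExp
    calc Real.exp (f t) * ∏' s : Set.Ioc (0 : ℝ) t,
          (1 + jumpAt f s.val) * Real.exp (-(jumpAt f s.val))
        ≤ Real.exp (f t) * 1 := by
          rw [htprod]
          exact mul_le_mul_of_nonneg_left (Real.exp_le_one_iff.2 hsumle) (Real.exp_pos _).le
      _ = Real.exp (f t) := mul_one _
end

section
/- Let T > 0 and let f : ℝ → ℝ be càdlàg and of bounded variation on [0,T] with Δf(s) > −1 for every s ∈ (0,T]. Then the family ((Δf(s))² / (1 + Δf(s)))_{s ∈ (0,T]} is summable, i.e. ∑_{0<s≤T} (Δf(s))²/(1 + Δf(s)) < ∞. -/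
open Set Filter


lemma jump_le_var (f : ℝ → ℝ) (a b : ℝ) (hab : a < b)
    (hlim : Filter.Tendsto f (nhdsWithin b (Set.Iio b)) (nhds (Function.leftLim f b))) :
    edist (f b) (Function.leftLim f b) ≤ eVariationOn f (Set.Icc a b) := by
  have h1 : Tendsto (fun t => edist (f b) (f t)) (nhdsWithin b (Set.Iio b))
      (nhds (edist (f b) (Function.leftLim f b))) := tendsto_const_nhds.edist hlim
  refine le_of_tendsto h1 ?_
  filter_upwards [Ioo_mem_nhdsLT_of_mem (by simp [hab] : b ∈ Set.Ioc a b)] with t ht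
  exact eVariationOn.edist_le f ⟨hab.le, le_rfl⟩ ⟨ht.1.le, ht.2.le⟩

lemma sum_jump_le (f : ℝ → ℝ) (T : ℝ)
    (hlim : ∀ s ∈ Set.Ioc (0:ℝ) T,
      Tendsto f (nhdsWithin s (Set.Iio s)) (nhds (Function.leftLim f s))) :
    ∀ S : Finset ℝ, ∀ a b : ℝ, 0 ≤ a → b ≤ T → ↑S ⊆ Set.Ioc a b →
    ∑ s ∈ S, edist (f s) (Function.leftLim f s) ≤ eVariationOn f (Set.Icc a b) := by
  intro S
  induction S using Finset.strongInduction with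
  | _ S IH =>
    intro a b ha hb hS
    rcases S.eq_empty_or_nonempty with rfl | hne
    · simp
    · set m := S.max' hne with hm
      have hmS : m ∈ S := S.max'_mem hne
      have hmIoc : m ∈ Set.Ioc a b := hS hmS
      have hm0T : m ∈ Set.Ioc 0 T := ⟨lt_of_le_of_lt ha hmIoc.1, hmIoc.2.trans hb⟩
      have hsum : ∑ s ∈ S, edist (f s) (Function.leftLim f s)
          = edist (f m) (Function.leftLim f m)
            + ∑ s ∈ S.erase m, edist (f s) (Function.leftLim f s) :=
        (Finset.add_sum_erase _ _ hmS).symm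
      rcases (S.erase m).eq_empty_or_nonempty with he | hne'
      · rw [hsum, he, Finset.sum_empty, add_zero]
        exact (jump_le_var f a m hmIoc.1 (hlim m hm0T)).trans
          (eVariationOn.mono f (Set.Icc_subset_Icc le_rfl hmIoc.2))
      · set a' := (S.erase m).max' hne' with ha'def
        have ha'S : a' ∈ S.erase m := Finset.max'_mem _ _
        have ha'm : a' < m := lt_of_le_of_ne (S.le_max' a' (Finset.mem_of_mem_erase ha'S))
          (Finset.ne_of_mem_erase ha'S)
        have ha'Ioc : a' ∈ Set.Ioc a b := hS (Finset.mem_of_mem_erase ha'S)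
        have hsub : ↑(S.erase m) ⊆ Set.Ioc a a' := by
          intro x hx
          have hx' : x ∈ S.erase m := hx
          exact ⟨(hS (Finset.mem_of_mem_erase hx')).1, Finset.le_max' _ x hx'⟩
        have hIH : ∑ s ∈ S.erase m, edist (f s) (Function.leftLim f s)
            ≤ eVariationOn f (Set.Icc a a') :=
          IH (S.erase m) (Finset.erase_ssubset hmS) a a' ha (ha'Ioc.2.trans hb) hsub
        have hjmp : edist (f m) (Function.leftLim f m) ≤ eVariationOn f (Set.Icc a' m) :=
          jump_le_var f a' m ha'm (hlim m hm0T)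
        have hsplit : eVariationOn f (Set.Icc a a') + eVariationOn f (Set.Icc a' m)
            = eVariationOn f (Set.Icc a m) := by
          have := eVariationOn.Icc_add_Icc f (s := Set.Icc a m) ha'Ioc.1.le ha'm.le
            (⟨ha'Ioc.1.le, ha'm.le⟩ : a' ∈ Set.Icc a m)
          rwa [Set.inter_eq_self_of_subset_right (Set.Icc_subset_Icc le_rfl ha'm.le),
            Set.inter_eq_self_of_subset_right (Set.Icc_subset_Icc ha'Ioc.1.le le_rfl),
            Set.inter_self] at this
        calc ∑ s ∈ S, edist (f s) (Function.leftLim f s)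
            = edist (f m) (Function.leftLim f m)
              + ∑ s ∈ S.erase m, edist (f s) (Function.leftLim f s) := hsum
          _ ≤ eVariationOn f (Set.Icc a' m) + eVariationOn f (Set.Icc a a') :=
              add_le_add hjmp hIH
          _ = eVariationOn f (Set.Icc a m) := by rw [add_comm, hsplit]
          _ ≤ eVariationOn f (Set.Icc a b) :=
              eVariationOn.mono f (Set.Icc_subset_Icc le_rfl hmIoc.2)

/-- For `f` càdlàg of bounded variation on `[0,T]` with all jumps `> -1`,
the family `((Δf s)² / (1 + Δf s))_{s ∈ (0,T]}` is summable. -/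
theorem summable_sq_jump_div_one_add_jump
    (T : ℝ) (hT : 0 < T) (f : ℝ → ℝ)
    (hc : CadlagOn f T) (hBV : BoundedVariationOn f (Set.Icc (0 : ℝ) T))
    (hjump : ∀ s ∈ Set.Ioc (0 : ℝ) T, -1 < jumpAt f s) :
    Summable (fun s : Set.Ioc (0 : ℝ) T => (jumpAt f s) ^ 2 / (1 + jumpAt f s)) := by
  set g : Set.Ioc (0:ℝ) T → ℝ := fun s => |jumpAt f s| with hg_def
  have hg0 : ∀ s, 0 ≤ g s := fun s => abs_nonneg _
  -- summability of absolute jumps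
  have hg : Summable g := by
    apply summable_of_sum_le (c := (eVariationOn f (Set.Icc (0:ℝ) T)).toReal) hg0
    intro u
    set S : Finset ℝ := u.image Subtype.val with hS_def
    have hSsub : ↑S ⊆ Set.Ioc (0:ℝ) T := by
      intro x hx
      simp only [hS_def, Finset.coe_image, Set.mem_image] at hx
      obtain ⟨s, _, rfl⟩ := hx
      exact s.2
    have hkey := sum_jump_le f T hc.2 S 0 T le_rfl le_rfl hSsub
    have hEq : ∑ s ∈ u, g s = (∑ s ∈ S, edist (f s) (Function.leftLim f s)).toReal := by
      rw [ENNReal.toReal_sum (fun a _ => edist_ne_top _ _), hS_def,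
        Finset.sum_image (fun a _ b _ h => Subtype.ext h)]
      refine Finset.sum_congr rfl fun s _ => ?_
      rw [← dist_edist, Real.dist_eq]
      rfl
    rw [hEq]
    exact ENNReal.toReal_mono hBV hkey
  -- the set of big jumps is finite
  have hF : {s : Set.Ioc (0:ℝ) T | ¬ g s < 1/2}.Finite := by
    have := hg.tendsto_cofinite_zero (Iio_mem_nhds (by norm_num : (0:ℝ) < 1/2))
    rw [Filter.mem_map, Filter.mem_cofinite] at this
    exact this
  set h : Set.Ioc (0:ℝ) T → ℝ := fun s => (jumpAt f s) ^ 2 / (1 + jumpAt f s) with hh_def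
  have hpos : ∀ s : Set.Ioc (0:ℝ) T, 0 < 1 + jumpAt f s := by
    intro s; have := hjump s s.2; linarith
  have hh0 : ∀ s, 0 ≤ h s := fun s => div_nonneg (sq_nonneg _) (hpos s).le
  have hf1 : Summable (fun s => if g s ≤ 1/2 then h s else 0) := by
    refine Summable.of_nonneg_of_le (fun s => ?_) (fun s => ?_) hg
    · split_ifs with hcs
      · exact hh0 s
      · exact le_rfl
    · split_ifs with hle
      · have h1 : (1:ℝ)/2 ≤ 1 + jumpAt f (s:ℝ) := by
          have := abs_le.1 hle; linarith [this.1]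
        show jumpAt f (s:ℝ) ^ 2 / (1 + jumpAt f (s:ℝ)) ≤ |jumpAt f (s:ℝ)|
        rw [div_le_iff₀ (hpos s)]
        calc jumpAt f (s:ℝ) ^ 2 = |jumpAt f (s:ℝ)| * |jumpAt f (s:ℝ)| := by
              rw [abs_mul_abs_self]; ring
          _ ≤ |jumpAt f (s:ℝ)| * (1 + jumpAt f (s:ℝ)) := by
              nlinarith [abs_nonneg (jumpAt f (s:ℝ)), abs_le.1 hle]
      · exact hg0 s
  have hf2 : Summable (fun s => if g s ≤ 1/2 then 0 else h s) := by
    apply summable_of_ne_finset_zero (s := hF.toFinset)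
    intro s hs
    rw [Set.Finite.mem_toFinset] at hs
    simp only [Set.mem_setOf_eq, not_not] at hs
    rw [if_pos hs.le]
  have := hf1.add hf2
  refine this.congr fun s => ?_
  by_cases hcs : g s ≤ 1/2
  · rw [if_pos hcs, if_pos hcs, add_zero]
  · rw [if_neg hcs, if_neg hcs, zero_add]
end

section
/- Let T > 0 and let ν : ℝ → ℝ be a nondecreasing right-continuous function (a Stieltjes function) with induced Borel measure dν. Then for every constant u₀ ∈ ℝ and all 0 ≤ s ≤ t ≤ T, the function u(t) := u₀ · 𝔈(ν)(t) / 𝔈(ν)(s) satisfies the Lebesgue–Stieltjes integral equation u(t) = u(s) + ∫_{(s,t]} u(r⁻) dν(r), where u(r⁻) denotes the left limit of u at r. -/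
open Set Filter MeasureTheory
open Topology

namespace SEaux

variable (ν : StieltjesFunction ℝ)

noncomputable def J (r : ℝ) : ℝ := jumpAt (fun x => ν x) r

noncomputable def L (r : ℝ) : ℝ := Real.log (1 + J ν r) - J ν r

noncomputable def Lam (x : ℝ) : ℝ := ∑' r : Set.Ioc (0:ℝ) x, L ν r

noncomputable def F (x : ℝ) : ℝ := ν x + Lam ν x

noncomputable def E (x : ℝ) : ℝ := Real.exp (F ν x)

@[simp] lemma J_eq (r : ℝ) : J ν r = ν r - Function.leftLim (fun x => ν x) r := rfl

lemma J_eq' (r : ℝ) : J ν r = ν r - Function.leftLim (↑ν) r := rfl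

lemma J_nonneg (r : ℝ) : 0 ≤ J ν r := by
  have := ν.mono.leftLim_le (le_refl r)
  simp only [J, jumpAt]
  linarith

lemma one_add_J_pos (r : ℝ) : (0:ℝ) < 1 + J ν r := by
  have := J_nonneg ν r; linarith

lemma sum_J_le (a : ℝ) (F : Finset ℝ) :
    ∀ b : ℝ, a ≤ b → ↑F ⊆ Set.Ioc a b → ∑ r ∈ F, J ν r ≤ ν b - ν a := by
  classical
  induction F using Finset.induction_on_max with
  | empty => intro b hab _; simpa using sub_nonneg.2 (ν.mono hab)
  | insert c Fs hlt ih =>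
    intro b hab hsub
    have hcmem : c ∈ Set.Ioc a b := hsub (by simp)
    have hc : ∑ r ∈ insert c Fs, J ν r = J ν c + ∑ r ∈ Fs, J ν r :=
      Finset.sum_insert (fun h => lt_irrefl c (hlt c h))
    have hJc : J ν c ≤ ν c - Function.leftLim ν c := le_of_eq rfl
    rcases Fs.eq_empty_or_nonempty with hFe | hFne
    · subst hFe
      have h1 : ν a ≤ Function.leftLim ν c := ν.mono.le_leftLim hcmem.1
      have h2 : ν c ≤ ν b := ν.mono hcmem.2
      rw [hc, Finset.sum_empty, add_zero, J_eq' ]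
      linarith
    · set m := Fs.max' hFne with hm
      have hmF : m ∈ Fs := Fs.max'_mem hFne
      have hma : a < m := (hsub (by simp [hmF])).1
      have hsub' : ↑Fs ⊆ Set.Ioc a m := by
        intro x hx
        exact ⟨(hsub (by simp [hx])).1, Fs.le_max' x hx⟩
      have hIH := ih m hma.le hsub'
      have hmc : m < c := hlt m hmF
      have h1 : ν m ≤ Function.leftLim ν c := ν.mono.le_leftLim hmc
      have h2 : ν c ≤ ν b := ν.mono hcmem.2
      rw [hc, J_eq' ]
      linarith

lemma sum_J_subtype_le {a b : ℝ} (hab : a ≤ b) (u : Finset (Set.Ioc a b)) :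
    ∑ i ∈ u, J ν ↑i ≤ ν b - ν a := by
  classical
  have hinj : ∀ x ∈ u, ∀ y ∈ u, (x : ℝ) = (y : ℝ) → x = y := by
    intros x _ y _ h; exact Subtype.ext h
  have h := sum_J_le ν a (u.image (fun r : Set.Ioc a b => (r : ℝ))) b hab (by
    rintro x hx
    simp only [Finset.coe_image, Set.mem_image] at hx
    obtain ⟨y, _, rfl⟩ := hx; exact y.2)
  rwa [Finset.sum_image hinj] at h

lemma summable_J {a b : ℝ} (hab : a ≤ b) :
    Summable (fun r : Set.Ioc a b => J ν r) :=
  summable_of_sum_le (fun r => J_nonneg ν r) (fun u => sum_J_subtype_le ν hab u)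

lemma tsum_J_le {a b : ℝ} (hab : a ≤ b) :
    ∑' r : Set.Ioc a b, J ν r ≤ ν b - ν a :=
  Summable.tsum_le_of_sum_le (summable_J ν hab) (fun u => sum_J_subtype_le ν hab u)

lemma sum_J_subset_le {a b : ℝ} (hab : a ≤ b) {S : Set ℝ} (hS : S ⊆ Set.Ioc a b)
    (u : Finset S) : ∑ i ∈ u, J ν ↑i ≤ ν b - ν a := by
  classical
  have hinj : ∀ x ∈ u, ∀ y ∈ u, (x : ℝ) = (y : ℝ) → x = y := by
    intros x _ y _ h; exact Subtype.ext h
  have h := sum_J_le ν a (u.image (fun r : S => (r : ℝ))) b hab (by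
    rintro x hx
    simp only [Finset.coe_image, Set.mem_image] at hx
    obtain ⟨y, _, rfl⟩ := hx; exact hS y.2)
  rwa [Finset.sum_image hinj] at h

lemma summable_J_subset {a b : ℝ} (hab : a ≤ b) {S : Set ℝ} (hS : S ⊆ Set.Ioc a b) :
    Summable (fun r : S => J ν r) :=
  summable_of_sum_le (fun r => J_nonneg ν r) (fun u => sum_J_subset_le ν hab hS u)

lemma tsum_J_Ioo_le {a b : ℝ} (hab : a < b) :
    ∑' r : Set.Ioo a b, J ν r ≤ Function.leftLim (fun x => ν x) b - ν a := by
  apply Summable.tsum_le_of_sum_le (summable_J_subset ν hab.le Set.Ioo_subset_Ioc_self)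
  intro u
  classical
  rcases u.eq_empty_or_nonempty with rfl | hne
  · simpa using ν.mono.le_leftLim hab
  · set u' := u.image (fun r : Set.Ioo a b => (r : ℝ)) with hu'
    have hu'ne : u'.Nonempty := hne.image _
    set m := u'.max' hu'ne with hm
    have hmmem : m ∈ u' := u'.max'_mem hu'ne
    have hmIoo : m ∈ Set.Ioo a b := by
      simp only [hu', Finset.mem_image] at hmmem
      obtain ⟨y, _, hy⟩ := hmmem; exact hy ▸ y.2
    have hinj : ∀ x ∈ u, ∀ y ∈ u, (x : ℝ) = (y : ℝ) → x = y := by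
      intros x _ y _ h; exact Subtype.ext h
    have h := sum_J_le ν a u' m hmIoo.1.le (by
      rintro x hx
      simp only [hu', Finset.coe_image, Set.mem_image] at hx
      obtain ⟨y, hy, rfl⟩ := hx
      exact ⟨y.2.1, u'.le_max' _ (Finset.mem_image_of_mem _ hy)⟩)
    rw [hu', Finset.sum_image hinj] at h
    have h2 : ν m ≤ Function.leftLim (fun x => ν x) b := ν.mono.le_leftLim hmIoo.2
    linarith

lemma L_nonpos (r : ℝ) : L ν r ≤ 0 := by
  have h := Real.log_le_sub_one_of_pos (one_add_J_pos ν r)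
  simp only [L]; linarith

lemma neg_L_le (r : ℝ) : -L ν r ≤ J ν r := by
  have h : (0:ℝ) ≤ Real.log (1 + J ν r) :=
    Real.log_nonneg (by have := J_nonneg ν r; linarith)
  simp only [L]; linarith

lemma logJ_nonneg (r : ℝ) : 0 ≤ Real.log (1 + J ν r) :=
  Real.log_nonneg (by have := J_nonneg ν r; linarith)

lemma logJ_le (r : ℝ) : Real.log (1 + J ν r) ≤ J ν r := by
  have := Real.log_le_sub_one_of_pos (one_add_J_pos ν r); linarith

lemma summable_L_subset {a b : ℝ} (hab : a ≤ b) {S : Set ℝ} (hS : S ⊆ Set.Ioc a b) :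
    Summable (fun r : S => L ν r) := by
  have h : Summable (fun r : S => -L ν r) :=
    Summable.of_nonneg_of_le (fun r => by have := L_nonpos ν (r:ℝ); linarith)
      (fun r => neg_L_le ν r) (summable_J_subset ν hab hS)
  simpa using h.neg

lemma summable_logJ_subset {a b : ℝ} (hab : a ≤ b) {S : Set ℝ} (hS : S ⊆ Set.Ioc a b) :
    Summable (fun r : S => Real.log (1 + J ν r)) :=
  Summable.of_nonneg_of_le (fun r => logJ_nonneg ν r)
    (fun r => logJ_le ν r) (summable_J_subset ν hab hS)

lemma Lam_nonpos (x : ℝ) : Lam ν x ≤ 0 := tsum_nonpos (fun r => L_nonpos ν r)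

lemma Lam_of_nonpos {x : ℝ} (hx : x ≤ 0) : Lam ν x = 0 := by
  rw [Lam, Set.Ioc_eq_empty (by exact fun h => absurd hx (not_le.2 h)), tsum_empty]

lemma Lam_add {a b : ℝ} (h0 : 0 ≤ a) (hab : a ≤ b) :
    Lam ν b = Lam ν a + ∑' r : Set.Ioc a b, L ν r := by
  have hd : Disjoint (Set.Ioc 0 a) (Set.Ioc a b) := Set.Ioc_disjoint_Ioc_of_le (le_refl a)
  have hs : Summable (fun r : Set.Ioc (0:ℝ) a => L ν r) :=
    summable_L_subset ν h0 (le_refl _)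
  have ht : Summable (fun r : Set.Ioc a b => L ν r) :=
    summable_L_subset ν hab (le_refl _)
  have h := Summable.tsum_union_disjoint (f := L ν) hd hs ht
  rw [Set.Ioc_union_Ioc_eq_Ioc h0 hab] at h
  rw [Lam, h]; rfl

lemma tsum_L_nonpos (S : Set ℝ) : ∑' r : S, L ν r ≤ 0 :=
  tsum_nonpos fun r => L_nonpos ν r

lemma neg_tsum_L_le {a b : ℝ} (hab : a ≤ b) :
    -∑' r : Set.Ioc a b, L ν r ≤ ∑' r : Set.Ioc a b, J ν r := by
  rw [← tsum_neg]
  exact Summable.tsum_le_tsum (fun r => neg_L_le ν r)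
    ((summable_L_subset ν hab (le_refl _)).neg) (summable_J ν hab)

lemma F_sub_le {a b : ℝ} (hab : a ≤ b) : F ν b - F ν a ≤ ν b - ν a := by
  rcases le_or_gt 0 a with h0 | h0
  · rw [F, F, Lam_add ν h0 hab]
    have := tsum_L_nonpos ν (Set.Ioc a b)
    linarith
  · rw [F, F, Lam_of_nonpos ν h0.le]
    have := Lam_nonpos ν b
    linarith

lemma F_mono_aux {a b : ℝ} (h0 : 0 ≤ a) (hab : a ≤ b) : F ν a ≤ F ν b := by
  rw [F, F, Lam_add ν h0 hab]
  have h1 := neg_tsum_L_le ν hab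
  have h2 := tsum_J_le ν hab
  linarith

lemma F_mono : Monotone (F ν) := by
  intro a b hab
  rcases le_or_gt 0 a with h0 | h0
  · exact F_mono_aux ν h0 hab
  · rcases le_or_gt 0 b with h1 | h1
    · have h2 : F ν a ≤ F ν 0 := by
        rw [F, F, Lam_of_nonpos ν h0.le, Lam_of_nonpos ν (le_refl 0)]
        simpa using ν.mono h0.le
      exact h2.trans (F_mono_aux ν (le_refl 0) h1)
    · rw [F, F, Lam_of_nonpos ν h0.le, Lam_of_nonpos ν h1.le]
      simpa using ν.mono hab

lemma E_pos (x : ℝ) : 0 < E ν x := Real.exp_pos _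

lemma E_mono : Monotone (E ν) := fun _ _ h => Real.exp_le_exp.2 (F_mono ν h)

lemma E_sub_le {a b : ℝ} (hab : a ≤ b) : E ν b - E ν a ≤ E ν b * (ν b - ν a) := by
  have hEa : E ν a = E ν b * Real.exp (F ν a - F ν b) := by
    rw [E, E, ← Real.exp_add]; ring_nf
  have h1 : 1 - Real.exp (F ν a - F ν b) ≤ F ν b - F ν a := by
    have := Real.add_one_le_exp (F ν a - F ν b); linarith
  have h2 : F ν b - F ν a ≤ ν b - ν a := F_sub_le ν hab
  have hEb := (E_pos ν b).le
  nlinarith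

lemma one_add_sum_le_prod {ι : Type*} (f : ι → ℝ) (hf : ∀ i, 0 ≤ f i) (u : Finset ι) :
    1 + ∑ i ∈ u, f i ≤ ∏ i ∈ u, (1 + f i) := by
  classical
  induction u using Finset.induction with
  | empty => simp
  | @insert a s hni ih =>
    rw [Finset.sum_insert hni, Finset.prod_insert hni]
    have hs : 0 ≤ ∑ i ∈ s, f i := Finset.sum_nonneg fun i _ => hf i
    nlinarith [hf a]

lemma exp_tsum_logJ_ge {a b : ℝ} (hab : a ≤ b) :
    1 + ∑' r : Set.Ioc a b, J ν r ≤
      Real.exp (∑' r : Set.Ioc a b, Real.log (1 + J ν r)) := by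
  have hlog := (summable_logJ_subset ν hab (le_refl _)).hasSum
  have hprod := hlog.rexp
  have heq : (Real.exp ∘ fun r : Set.Ioc a b => Real.log (1 + J ν r)) =
      fun r : Set.Ioc a b => 1 + J ν r := by
    funext r; exact Real.exp_log (one_add_J_pos ν r)
  rw [heq] at hprod
  have hJ := (summable_J ν hab).hasSum
  have t1 : Tendsto (fun u : Finset (Set.Ioc a b) => 1 + ∑ i ∈ u, J ν i) atTop
      (𝓝 (1 + ∑' r : Set.Ioc a b, J ν r)) := hJ.const_add 1
  exact le_of_tendsto_of_tendsto' t1 hprod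
    (fun u => one_add_sum_le_prod (fun r : Set.Ioc a b => J ν r) (fun r => J_nonneg ν r) u)

lemma E_sub_ge {a b : ℝ} (h0 : 0 ≤ a) (hab : a ≤ b) :
    E ν a * (ν b - ν a) ≤ E ν b - E ν a := by
  set SJ := ∑' r : Set.Ioc a b, J ν r with hSJdef
  set SLog := ∑' r : Set.Ioc a b, Real.log (1 + J ν r) with hSLdef
  have hSJ : 0 ≤ SJ := tsum_nonneg fun r => J_nonneg ν r
  have hSJle : SJ ≤ ν b - ν a := tsum_J_le ν hab
  have hL : ∑' r : Set.Ioc a b, L ν r = SLog - SJ := by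
    rw [hSLdef, hSJdef, ← Summable.tsum_sub (summable_logJ_subset ν hab (le_refl _))
      (summable_J ν hab)]
    rfl
  have hFb : F ν b = F ν a + ((ν b - ν a - SJ) + SLog) := by
    rw [F, F, Lam_add ν h0 hab, hL]; ring
  have hexp : 1 + (ν b - ν a) ≤ Real.exp ((ν b - ν a - SJ) + SLog) := by
    rw [Real.exp_add]
    have h1 : 1 + (ν b - ν a - SJ) ≤ Real.exp (ν b - ν a - SJ) := by
      have := Real.add_one_le_exp (ν b - ν a - SJ); linarith
    have h2 : 1 + SJ ≤ Real.exp SLog := exp_tsum_logJ_ge ν hab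
    nlinarith [Real.exp_pos (ν b - ν a - SJ)]
  have hEb : E ν b = E ν a * Real.exp ((ν b - ν a - SJ) + SLog) := by
    rw [E, E, hFb, Real.exp_add]
  nlinarith [E_pos ν a]

lemma F_rightTendsto (x : ℝ) : Tendsto (F ν) (𝓝[≥] x) (𝓝 (F ν x)) := by
  have hν : Tendsto (fun y => (ν y : ℝ)) (𝓝[≥] x) (𝓝 (ν x)) := ν.right_continuous x
  have hup : Tendsto (fun y => F ν x + (ν y - ν x)) (𝓝[≥] x) (𝓝 (F ν x)) := by
    have := ((hν.sub_const (ν x)).const_add (F ν x))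
    simpa using this
  refine tendsto_of_tendsto_of_tendsto_of_le_of_le' tendsto_const_nhds hup ?_ ?_
  · filter_upwards [self_mem_nhdsWithin] with y (hy : y ∈ Set.Ici x)
    exact F_mono ν hy
  · filter_upwards [self_mem_nhdsWithin] with y (hy : y ∈ Set.Ici x)
    have := F_sub_le ν hy
    linarith

lemma neg_tsum_L_le_subset {a b : ℝ} (hab : a ≤ b) {S : Set ℝ} (hS : S ⊆ Set.Ioc a b) :
    -∑' r : S, L ν r ≤ ∑' r : S, J ν r := by
  rw [← tsum_neg]
  exact Summable.tsum_le_tsum (fun r => neg_L_le ν r)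
    ((summable_L_subset ν hab hS).neg) (summable_J_subset ν hab hS)

lemma tsum_L_Ioc_eq {a x : ℝ} (hax : a < x) :
    ∑' r : Set.Ioc a x, L ν r = L ν x + ∑' r : Set.Ioo a x, L ν r := by
  have hu : Set.Ioo a x ∪ {x} = Set.Ioc a x := by
    rw [← Set.Ioo_union_Icc_eq_Ioc hax (le_refl x), Set.Icc_self]
  have hd : Disjoint (Set.Ioo a x) ({x} : Set ℝ) := by
    simp [Set.disjoint_singleton_right]
  have hs : Summable (fun r : Set.Ioo a x => L ν r) :=
    summable_L_subset ν hax.le Set.Ioo_subset_Ioc_self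
  have ht : Summable (fun r : ({x} : Set ℝ) => L ν r) := .of_finite
  have h := Summable.tsum_union_disjoint (f := L ν) hd hs ht
  rw [hu] at h
  rw [h, tsum_singleton x (L ν), add_comm]

lemma F_leftTendsto {x : ℝ} (hx : 0 < x) :
    Tendsto (F ν) (𝓝[<] x)
      (𝓝 (Function.leftLim (fun y => ν y) x + Lam ν x - L ν x)) := by
  set lν := Function.leftLim (fun y => ν y) x with hlν
  have hν : Tendsto (fun y => (ν y : ℝ)) (𝓝[<] x) (𝓝 lν) := ν.mono.tendsto_leftLim x
  have hmem : Set.Ioo 0 x ∈ 𝓝[<] x := Ioo_mem_nhdsLT_of_mem ⟨hx, le_refl x⟩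
  have hlow : Tendsto (fun a => F ν x - ν x + ν a - L ν x) (𝓝[<] x)
      (𝓝 (lν + Lam ν x - L ν x)) := by
    have := ((hν.const_add (F ν x - ν x)).sub_const (L ν x))
    have hval : F ν x - ν x + lν - L ν x = lν + Lam ν x - L ν x := by
      rw [F]; ring
    rw [← hval]
    exact this
  have hup : Tendsto (fun a => F ν x - ν x + ν a - L ν x + (lν - ν a)) (𝓝[<] x)
      (𝓝 (lν + Lam ν x - L ν x)) := by
    have h2 := hlow.add (hν.const_sub lν)
    have hval : lν + Lam ν x - L ν x + (lν - lν) = lν + Lam ν x - L ν x := by ring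
    rw [← hval]
    exact h2
  refine tendsto_of_tendsto_of_tendsto_of_le_of_le' hlow hup ?_ ?_ <;>
  · filter_upwards [hmem] with a ha
    have h0a : (0:ℝ) ≤ a := ha.1.le
    have hax : a < x := ha.2
    have hFa : F ν a = F ν x - ν x + ν a - L ν x - ∑' r : Set.Ioo a x, L ν r := by
      have h1 : F ν x = ν x + Lam ν a + ∑' r : Set.Ioc a x, L ν r := by
        rw [F, Lam_add ν h0a hax.le]; ring
      have h2 := tsum_L_Ioc_eq ν hax
      rw [F]
      rw [h2] at h1
      linarith
    have hnn : 0 ≤ -∑' r : Set.Ioo a x, L ν r := by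
      have := tsum_L_nonpos ν (Set.Ioo a x); linarith
    have hle : -∑' r : Set.Ioo a x, L ν r ≤ lν - ν a := by
      have h3 := neg_tsum_L_le_subset ν hax.le (Set.Ioo_subset_Ioc_self (a := x) (b := a))
      have h4 := tsum_J_Ioo_le ν hax
      exact h3.trans h4
    rw [hFa]
    first
      | linarith
      | linarith

lemma E_rightTendsto (x : ℝ) : Tendsto (E ν) (𝓝[≥] x) (𝓝 (E ν x)) :=
  (F_rightTendsto ν x).rexp

lemma leftLim_nu_eq (x : ℝ) :
    Function.leftLim (fun y => (ν y : ℝ)) x = ν x - J ν x := by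
  rw [J_eq]; ring

lemma E_div_eq (x : ℝ) : E ν x / (1 + J ν x) =
    Real.exp (Function.leftLim (fun y => ν y) x + Lam ν x - L ν x) := by
  have h1 : Function.leftLim (fun y => (ν y : ℝ)) x + Lam ν x - L ν x
      = (ν x + Lam ν x) - Real.log (1 + J ν x) := by
    rw [leftLim_nu_eq, L]; ring
  rw [h1, Real.exp_sub, Real.exp_log (one_add_J_pos ν x)]
  rfl

lemma E_leftTendsto {x : ℝ} (hx : 0 < x) :
    Tendsto (E ν) (𝓝[<] x) (𝓝 (E ν x / (1 + J ν x))) := by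
  rw [E_div_eq]
  exact (F_leftTendsto ν hx).rexp

lemma leftLim_E {x : ℝ} (hx : 0 < x) :
    Function.leftLim (E ν) x = E ν x / (1 + J ν x) := by
  have hb : (𝓝[<] x).NeBot := inferInstance
  exact leftLim_eq_of_tendsto (E_leftTendsto ν hx)

noncomputable def Ebar (T : ℝ) : StieltjesFunction ℝ where
  toFun x := E ν (min x T)
  mono' a b hab := E_mono ν (min_le_min hab (le_refl T))
  right_continuous' x := by
    have h1 : ContinuousWithinAt (E ν) (Set.Ici (min x T)) (min x T) :=
      E_rightTendsto ν (min x T)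
    have h2 : ContinuousWithinAt (fun y => min y T) (Set.Ici x) x :=
      (continuous_id.min continuous_const).continuousWithinAt
    exact ContinuousWithinAt.comp (g := E ν) (f := fun y => min y T)
      (t := Set.Ici (min x T)) h1 h2 (fun y hy => min_le_min hy (le_refl T))

@[simp] lemma Ebar_apply (T x : ℝ) : Ebar ν T x = E ν (min x T) := rfl

noncomputable def CC (T : ℝ) : ℝ := E ν T

lemma CC_pos (T : ℝ) : 0 < CC ν T := E_pos ν T

lemma nu_min_sub_le {T a b : ℝ} (hab : a ≤ b) :
    ν (min b T) - ν (min a T) ≤ ν b - ν a := by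
  rcases le_total b T with h | h
  · rw [min_eq_left h, min_eq_left (hab.trans h)]
  · rcases le_total a T with h' | h'
    · rw [min_eq_right h, min_eq_left h']
      have := ν.mono h
      linarith
    · rw [min_eq_right h, min_eq_right h']
      have := ν.mono hab
      linarith

noncomputable def Wf (T : ℝ) : StieltjesFunction ℝ where
  toFun x := CC ν T * ν x - E ν (min x T)
  mono' a b hab := by
    have h1 : E ν (min b T) - E ν (min a T) ≤
        E ν (min b T) * (ν (min b T) - ν (min a T)) :=
      E_sub_le ν (min_le_min hab (le_refl T))
    have h2 : ν (min b T) - ν (min a T) ≤ ν b - ν a := nu_min_sub_le ν hab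
    have h3 : E ν (min b T) ≤ CC ν T := E_mono ν (min_le_right b T)
    have h4 : (0:ℝ) ≤ ν (min b T) - ν (min a T) := by
      have := ν.mono (min_le_min hab (le_refl T)); linarith
    have h5 : (0:ℝ) < E ν (min b T) := E_pos ν _
    have h6 : (0:ℝ) < CC ν T := CC_pos ν T
    have h7 : (0:ℝ) ≤ ν b - ν a := by have := ν.mono hab; linarith
    simp only [ge_iff_le]
    nlinarith
  right_continuous' x := by
    have hE : ContinuousWithinAt (fun y => E ν (min y T)) (Set.Ici x) x :=
      (Ebar ν T).right_continuous x
    exact ((ν.right_continuous x).const_mul (CC ν T)).sub hE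

@[simp] lemma Wf_apply (T x : ℝ) : Wf ν T x = CC ν T * ν x - E ν (min x T) := rfl

noncomputable def Cnu (T : ℝ) : StieltjesFunction ℝ where
  toFun x := CC ν T * ν x
  mono' a b hab := by
    have h := ν.mono hab
    have h6 : (0:ℝ) < CC ν T := CC_pos ν T
    show CC ν T * ν a ≤ CC ν T * ν b
    nlinarith
  right_continuous' x := (ν.right_continuous x).const_mul (CC ν T)

@[simp] lemma Cnu_apply (T x : ℝ) : Cnu ν T x = CC ν T * ν x := rfl

lemma measure_add_eq (T : ℝ) :
    (Ebar ν T).measure + (Wf ν T).measure = (Cnu ν T).measure := by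
  refine Measure.ext_of_Ioc' _ _ ?_ ?_
  · intro a b _
    rw [Measure.coe_add, Pi.add_apply, StieltjesFunction.measure_Ioc,
      StieltjesFunction.measure_Ioc]
    exact (ENNReal.add_lt_top.2 ⟨ENNReal.ofReal_lt_top, ENNReal.ofReal_lt_top⟩).ne
  · intro a b hab
    rw [Measure.coe_add, Pi.add_apply, StieltjesFunction.measure_Ioc,
      StieltjesFunction.measure_Ioc, StieltjesFunction.measure_Ioc]
    have h1 : (0:ℝ) ≤ Ebar ν T b - Ebar ν T a := by
      have := (Ebar ν T).mono hab.le; linarith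
    have h2 : (0:ℝ) ≤ Wf ν T b - Wf ν T a := by
      have := (Wf ν T).mono hab.le; linarith
    rw [← ENNReal.ofReal_add h1 h2]
    congr 1
    simp only [Ebar_apply, Wf_apply, Cnu_apply]
    ring

lemma Cnu_measure_eq (T : ℝ) :
    (Cnu ν T).measure = ENNReal.ofReal (CC ν T) • ν.measure := by
  refine Measure.ext_of_Ioc' _ _ ?_ ?_
  · intro a b _
    rw [StieltjesFunction.measure_Ioc]
    exact ENNReal.ofReal_ne_top
  · intro a b _
    rw [StieltjesFunction.measure_Ioc, Measure.smul_apply,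
      StieltjesFunction.measure_Ioc, smul_eq_mul,
      ← ENNReal.ofReal_mul (CC_pos ν T).le]
    congr 1
    simp only [Cnu_apply]
    ring

lemma rho_le (T : ℝ) :
    (Ebar ν T).measure ≤ ENNReal.ofReal (CC ν T) • ν.measure := by
  rw [← Cnu_measure_eq, ← measure_add_eq]
  exact Measure.le_add_right (le_refl _)

lemma rho_ac (T : ℝ) : (Ebar ν T).measure ≪ ν.measure :=
  (Measure.absolutelyContinuous_of_le (rho_le ν T)).trans
    Measure.smul_absolutelyContinuous

lemma E_Icc_le {a b : ℝ} (hab : a ≤ b) :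
    E ν b - Function.leftLim (E ν) a ≤
      E ν b * (ν b - Function.leftLim (fun y => ν y) a) := by
  have hE : Tendsto (E ν) (𝓝[<] a) (𝓝 (Function.leftLim (E ν) a)) :=
    (E_mono ν).tendsto_leftLim a
  have hν : Tendsto (fun y => (ν y : ℝ)) (𝓝[<] a) (𝓝 (Function.leftLim (fun y => ν y) a)) :=
    ν.mono.tendsto_leftLim a
  have hL : Tendsto (fun a' => E ν b - E ν a') (𝓝[<] a)
      (𝓝 (E ν b - Function.leftLim (E ν) a)) := (hE.const_sub _)
  have hR : Tendsto (fun a' => E ν b * (ν b - ν a')) (𝓝[<] a)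
      (𝓝 (E ν b * (ν b - Function.leftLim (fun y => ν y) a))) :=
    ((hν.const_sub _).const_mul _)
  refine le_of_tendsto_of_tendsto hL hR ?_
  filter_upwards [self_mem_nhdsWithin] with a' (ha' : a' < a)
  exact E_sub_le ν (ha'.le.trans hab)

lemma E_Icc_ge {a b : ℝ} (h0 : 0 < a) (hab : a ≤ b) :
    Function.leftLim (E ν) a * (ν b - Function.leftLim (fun y => ν y) a) ≤
      E ν b - Function.leftLim (E ν) a := by
  have hE : Tendsto (E ν) (𝓝[<] a) (𝓝 (Function.leftLim (E ν) a)) :=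
    (E_mono ν).tendsto_leftLim a
  have hν : Tendsto (fun y => (ν y : ℝ)) (𝓝[<] a) (𝓝 (Function.leftLim (fun y => ν y) a)) :=
    ν.mono.tendsto_leftLim a
  have hL : Tendsto (fun a' => E ν a' * (ν b - ν a')) (𝓝[<] a)
      (𝓝 (Function.leftLim (E ν) a * (ν b - Function.leftLim (fun y => ν y) a))) :=
    hE.mul (hν.const_sub _)
  have hR : Tendsto (fun a' => E ν b - E ν a') (𝓝[<] a)
      (𝓝 (E ν b - Function.leftLim (E ν) a)) := (hE.const_sub _)
  have hmem : Set.Ioo 0 a ∈ 𝓝[<] a := Ioo_mem_nhdsLT_of_mem ⟨h0, le_refl a⟩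
  refine le_of_tendsto_of_tendsto hL hR ?_
  filter_upwards [hmem] with a' ha'
  exact E_sub_ge ν ha'.1.le (ha'.2.le.trans hab)

lemma leftLim_Ebar {T y : ℝ} (hy : y ≤ T) :
    Function.leftLim (⇑(Ebar ν T)) y = Function.leftLim (E ν) y := by
  have h1 : Tendsto (E ν) (𝓝[<] y) (𝓝 (Function.leftLim (E ν) y)) :=
    (E_mono ν).tendsto_leftLim y
  have h2 : Tendsto (⇑(Ebar ν T)) (𝓝[<] y) (𝓝 (Function.leftLim (E ν) y)) := by
    refine h1.congr' ?_
    filter_upwards [self_mem_nhdsWithin] with z (hz : z < y)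
    simp [Ebar_apply, min_eq_left (hz.le.trans hy)]
  have hb : (𝓝[<] y).NeBot := inferInstance
  exact leftLim_eq_of_tendsto h2

lemma measure_null_noSupport (μ : Measure ℝ) :
    μ {x : ℝ | ∃ r > (0:ℝ), μ (Metric.closedBall x r) = 0} = 0 := by
  apply measure_null_of_locally_null
  rintro x ⟨r, hr, hxr⟩
  exact ⟨Metric.closedBall x r,
    mem_nhdsWithin_of_mem_nhds (Metric.closedBall_mem_nhds x hr), hxr⟩

lemma iInter_closedBall_gt (x : ℝ) :
    ⋂ r > (0:ℝ), Metric.closedBall x r = {x} := by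
  ext y
  simp only [Set.mem_iInter, Metric.mem_closedBall, Set.mem_singleton_iff]
  constructor
  · intro h
    have : dist y x ≤ 0 := le_of_forall_gt_imp_ge_of_dense fun r hr => h r hr
    have := dist_nonneg (x := y) (y := x)
    have hd : dist y x = 0 := le_antisymm ‹dist y x ≤ 0› this
    exact dist_eq_zero.1 hd
  · rintro rfl r hr
    simpa using hr.le

lemma tendsto_measure_cb (μ : Measure ℝ) [IsLocallyFiniteMeasure μ] (x : ℝ) :
    Tendsto (fun r => μ (Metric.closedBall x r)) (𝓝[>] (0:ℝ)) (𝓝 (μ {x})) := by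
  have h := tendsto_measure_biInter_gt (μ := μ)
    (s := fun r => Metric.closedBall x r) (a := (0:ℝ))
    (fun r _ => (Metric.isClosed_closedBall).nullMeasurableSet)
    (fun i j _ hij => Metric.closedBall_subset_closedBall hij)
    ⟨1, one_pos, ((isCompact_closedBall x 1).measure_lt_top).ne⟩
  rwa [iInter_closedBall_gt] at h

lemma leftLim_E_nonneg (y : ℝ) : 0 ≤ Function.leftLim (E ν) y :=
  ((E_pos ν (y - 1)).le).trans ((E_mono ν).le_leftLim (by linarith))

lemma rnDeriv_ae (T : ℝ) :
    ∀ᵐ x ∂ν.measure, x ∈ Set.Ioc (0:ℝ) T →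
      (Ebar ν T).measure.rnDeriv ν.measure x
        = ENNReal.ofReal (Function.leftLim (E ν) x) := by
  have hbesi := Besicovitch.ae_tendsto_rnDeriv (Ebar ν T).measure ν.measure
  have h1 : ∀ᵐ x ∂ν.measure,
      ¬ ∃ r > (0:ℝ), ν.measure (Metric.closedBall x r) = 0 := by
    rw [ae_iff]
    simpa [not_not] using measure_null_noSupport ν.measure
  have h2 : ∀ᵐ x ∂ν.measure, ¬ (x = T ∧ ν.measure {x} = 0) := by
    rw [ae_iff]
    simp only [not_not]
    by_cases hμT : ν.measure {T} = 0
    · exact measure_mono_null (fun x hx => by rw [Set.mem_setOf_eq] at hx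
                                              rw [Set.mem_singleton_iff]; exact hx.1) hμT
    · have : {x : ℝ | x = T ∧ ν.measure {x} = 0} = ∅ := by
        ext x; simp only [Set.mem_setOf_eq, Set.mem_empty_iff_false, iff_false, not_and]
        rintro rfl; exact hμT
      rw [this]; exact measure_empty
  filter_upwards [hbesi, h1, h2] with x hx hgood hTx hxmem
  obtain ⟨hx0, hxT⟩ := hxmem
  push_neg at hgood
  by_cases hatom : ν.measure {x} = 0
  · -- no atom at x
    have hxT' : x < T := lt_of_le_of_ne hxT (fun h => hTx ⟨h, hatom⟩)
    have hJx : J ν x = 0 := by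
      have hsing := ν.measure_singleton x
      rw [hsing] at hatom
      have h := ENNReal.ofReal_eq_zero.1 hatom
      have h' := J_nonneg ν x
      rw [J_eq'] at h' ⊢
      linarith
    have hlLE : Function.leftLim (E ν) x = E ν x := by
      rw [leftLim_E ν hx0, hJx]; simp
    have hEleft : Tendsto (E ν) (𝓝[<] x) (𝓝 (E ν x)) := by
      have := E_leftTendsto ν hx0
      rw [hJx] at this
      simpa using this
    have key : Tendsto (fun r => (Ebar ν T).measure (Metric.closedBall x r) /
        ν.measure (Metric.closedBall x r)) (𝓝[>] (0:ℝ))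
        (𝓝 (ENNReal.ofReal (E ν x))) := by
      have hminpos : (0:ℝ) < min x (T - x) := lt_min hx0 (by linarith)
      have hmem : Set.Ioo (0:ℝ) (min x (T - x)) ∈ 𝓝[>] (0:ℝ) :=
        Ioo_mem_nhdsGT_of_mem ⟨le_refl 0, hminpos⟩
      have hfacts : ∀ᶠ r in 𝓝[>] (0:ℝ),
          (Ebar ν T).measure (Metric.closedBall x r)
            = ENNReal.ofReal (E ν (x + r) - Function.leftLim (E ν) (x - r)) ∧
          ν.measure (Metric.closedBall x r)
            = ENNReal.ofReal (ν (x + r) - Function.leftLim (fun y => ν y) (x - r)) ∧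
          0 < r ∧ r < x ∧ x + r ≤ T := by
        filter_upwards [hmem] with r hr
        have hr0 : 0 < r := hr.1
        have hrm : r < min x (T - x) := hr.2
        have hm1 : min x (T - x) ≤ x := min_le_left _ _
        have hm2 : min x (T - x) ≤ T - x := min_le_right _ _
        have hxr : x + r ≤ T := by linarith
        have hrx : r < x := by linarith
        refine ⟨?_, ?_, hr0, hrx, hxr⟩
        · rw [Real.closedBall_eq_Icc, (Ebar ν T).measure_Icc]
          congr 1
          rw [Ebar_apply, min_eq_left hxr, leftLim_Ebar ν (by linarith : x - r ≤ T)]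
          
        · rw [Real.closedBall_eq_Icc, ν.measure_Icc]
      have hub : ∀ᶠ r in 𝓝[>] (0:ℝ),
          (Ebar ν T).measure (Metric.closedBall x r) /
            ν.measure (Metric.closedBall x r) ≤ ENNReal.ofReal (E ν (x + r)) := by
        filter_upwards [hfacts] with r ⟨hρ, hμ, hr0, hrx, hxr⟩
        have hne0 : ν.measure (Metric.closedBall x r) ≠ 0 := hgood r hr0
        have hnetop : ν.measure (Metric.closedBall x r) ≠ ⊤ := by
          rw [hμ]; exact ENNReal.ofReal_ne_top
        rw [ENNReal.div_le_iff hne0 hnetop, hρ]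
        conv_rhs => rw [hμ]
        rw [← ENNReal.ofReal_mul (E_pos ν (x + r)).le]
        exact ENNReal.ofReal_le_ofReal (E_Icc_le ν (by linarith))
      have hlb : ∀ᶠ r in 𝓝[>] (0:ℝ),
          ENNReal.ofReal (Function.leftLim (E ν) (x - r)) ≤
            (Ebar ν T).measure (Metric.closedBall x r) /
              ν.measure (Metric.closedBall x r) := by
        filter_upwards [hfacts] with r ⟨hρ, hμ, hr0, hrx, hxr⟩
        have hne0 : ν.measure (Metric.closedBall x r) ≠ 0 := hgood r hr0
        have hnetop : ν.measure (Metric.closedBall x r) ≠ ⊤ := by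
          rw [hμ]; exact ENNReal.ofReal_ne_top
        rw [ENNReal.le_div_iff_mul_le (Or.inl hne0) (Or.inl hnetop), hρ]
        conv_lhs => rw [hμ]
        rw [← ENNReal.ofReal_mul (leftLim_E_nonneg ν (x - r))]
        exact ENNReal.ofReal_le_ofReal (E_Icc_ge ν (by linarith) (by linarith))
      have hmapR : Tendsto (fun r : ℝ => x + r) (𝓝[>] (0:ℝ)) (𝓝[≥] x) := by
        apply tendsto_nhdsWithin_of_tendsto_nhds_of_eventually_within
        · have : Tendsto (fun r : ℝ => x + r) (𝓝 (0:ℝ)) (𝓝 (x + 0)) :=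
            (continuous_const.add continuous_id).tendsto 0
          rw [add_zero] at this
          exact this.mono_left nhdsWithin_le_nhds
        · filter_upwards [self_mem_nhdsWithin] with r (hr : 0 < r)
          exact le_of_lt (by linarith : x < x + r)
      have hmapL : Tendsto (fun r : ℝ => x - r) (𝓝[>] (0:ℝ)) (𝓝[<] x) := by
        apply tendsto_nhdsWithin_of_tendsto_nhds_of_eventually_within
        · have : Tendsto (fun r : ℝ => x - r) (𝓝 (0:ℝ)) (𝓝 (x - 0)) :=
            (continuous_const.sub continuous_id).tendsto 0
          rw [sub_zero] at this
          exact this.mono_left nhdsWithin_le_nhds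
        · filter_upwards [self_mem_nhdsWithin] with r (hr : 0 < r)
          exact (by linarith : x - r < x)
      have hmapL2 : Tendsto (fun r : ℝ => x - 2*r) (𝓝[>] (0:ℝ)) (𝓝[<] x) := by
        apply tendsto_nhdsWithin_of_tendsto_nhds_of_eventually_within
        · have : Tendsto (fun r : ℝ => x - 2*r) (𝓝 (0:ℝ)) (𝓝 (x - 2*0)) :=
            (continuous_const.sub (continuous_const.mul continuous_id)).tendsto 0
          rw [mul_zero, sub_zero] at this
          exact this.mono_left nhdsWithin_le_nhds
        · filter_upwards [self_mem_nhdsWithin] with r (hr : 0 < r)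
          exact (by linarith : x - 2*r < x)
      have hulim : Tendsto (fun r => ENNReal.ofReal (E ν (x + r))) (𝓝[>] (0:ℝ))
          (𝓝 (ENNReal.ofReal (E ν x))) :=
        (ENNReal.continuous_ofReal.tendsto _).comp ((E_rightTendsto ν x).comp hmapR)
      have hllim : Tendsto (fun r => ENNReal.ofReal (Function.leftLim (E ν) (x - r)))
          (𝓝[>] (0:ℝ)) (𝓝 (ENNReal.ofReal (E ν x))) := by
        apply (ENNReal.continuous_ofReal.tendsto _).comp
        refine tendsto_of_tendsto_of_tendsto_of_le_of_le' (hEleft.comp hmapL2)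
          (hEleft.comp hmapL) ?_ ?_
        · filter_upwards [self_mem_nhdsWithin] with r (hr : 0 < r)
          show E ν (x - 2*r) ≤ Function.leftLim (E ν) (x - r)
          exact (E_mono ν).le_leftLim (by linarith)
        · filter_upwards [self_mem_nhdsWithin] with r (hr : 0 < r)
          show Function.leftLim (E ν) (x - r) ≤ E ν (x - r)
          exact (E_mono ν).leftLim_le (le_refl _)
      exact tendsto_of_tendsto_of_tendsto_of_le_of_le' hllim hulim hlb hub
    rw [hlLE]
    exact tendsto_nhds_unique hx key
  · -- atom at x
    have hρcb := tendsto_measure_cb (Ebar ν T).measure x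
    have hμcb := tendsto_measure_cb ν.measure x
    have hμtop : ν.measure {x} ≠ ⊤ := by
      rw [ν.measure_singleton]; exact ENNReal.ofReal_ne_top
    have hdiv := ENNReal.Tendsto.div hρcb (Or.inr hatom) hμcb (Or.inl hμtop)
    have huniq := tendsto_nhds_unique hx hdiv
    have hμx : ν.measure {x} = ENNReal.ofReal (J ν x) := by
      rw [ν.measure_singleton, J_eq']
    have hρx : (Ebar ν T).measure {x}
        = ENNReal.ofReal (Function.leftLim (E ν) x * J ν x) := by
      rw [(Ebar ν T).measure_singleton]
      have hmin : min x T = x := min_eq_left hxT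
      have hLL := leftLim_Ebar ν hxT
      rw [Ebar_apply, hmin, hLL]
      congr 1
      rw [leftLim_E ν hx0]
      have hpos : (1 : ℝ) + J ν x ≠ 0 := (one_add_J_pos ν x).ne'
      set c := E ν x / (1 + J ν x) with hc
      have h1 : c * (1 + J ν x) = E ν x := div_mul_cancel₀ _ hpos
      rw [← h1]
      ring
    rw [huniq, hρx, hμx, ENNReal.ofReal_mul (leftLim_E_nonneg ν x), mul_div_assoc,
      ENNReal.div_self (by rw [← hμx]; exact hatom) ENNReal.ofReal_ne_top, mul_one]

lemma leftLim_E_mono : Monotone (Function.leftLim (E ν)) := by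
  intro a b hab
  rcases eq_or_lt_of_le hab with rfl | h
  · exact le_refl _
  · exact ((E_mono ν).leftLim_le (le_refl a)).trans ((E_mono ν).le_leftLim h)

lemma integral_leftLim_eq (T s t : ℝ) (hs : 0 ≤ s) (hst : s ≤ t) (ht : t ≤ T) :
    ∫ r in Set.Ioc s t, Function.leftLim (E ν) r ∂ν.measure = E ν t - E ν s := by
  have hac := rho_ac ν T
  have hwd : ν.measure.withDensity ((Ebar ν T).measure.rnDeriv ν.measure)
      = (Ebar ν T).measure := Measure.withDensity_rnDeriv_eq _ _ hac
  have hIoc : MeasurableSet (Set.Ioc s t) := measurableSet_Ioc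
  have hlint : ∫⁻ r in Set.Ioc s t, (Ebar ν T).measure.rnDeriv ν.measure r ∂ν.measure
      = (Ebar ν T).measure (Set.Ioc s t) := by
    conv_rhs => rw [← hwd]
    rw [withDensity_apply _ hIoc]
  have hae : ∀ᵐ r ∂ν.measure.restrict (Set.Ioc s t),
      ENNReal.ofReal (Function.leftLim (E ν) r)
        = (Ebar ν T).measure.rnDeriv ν.measure r := by
    rw [ae_restrict_iff' hIoc]
    filter_upwards [rnDeriv_ae ν T] with r hr hrmem
    exact (hr ⟨lt_of_le_of_lt hs hrmem.1, hrmem.2.trans ht⟩).symm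
  have hcong : ∫⁻ r in Set.Ioc s t, ENNReal.ofReal (Function.leftLim (E ν) r) ∂ν.measure
      = ∫⁻ r in Set.Ioc s t, (Ebar ν T).measure.rnDeriv ν.measure r ∂ν.measure :=
    lintegral_congr_ae hae
  have hnn : 0 ≤ᵐ[ν.measure.restrict (Set.Ioc s t)] Function.leftLim (E ν) :=
    Filter.Eventually.of_forall (leftLim_E_nonneg ν)
  have hmeas : AEStronglyMeasurable (Function.leftLim (E ν))
      (ν.measure.restrict (Set.Ioc s t)) :=
    ((leftLim_E_mono ν).measurable).aestronglyMeasurable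
  rw [integral_eq_lintegral_of_nonneg_ae hnn hmeas, hcong, hlint,
    StieltjesFunction.measure_Ioc]
  rw [Ebar_apply, Ebar_apply, min_eq_left ht, min_eq_left (hst.trans ht)]
  rw [ENNReal.toReal_ofReal (by have := E_mono ν hst; linarith)]

lemma stieltjesExp_eq (y : ℝ) : stieltjesExp (fun x => ν x) y = E ν y := by
  rcases le_or_gt y 0 with hy | hy
  · rw [stieltjesExp, E, F, Lam_of_nonpos ν hy,
      Set.Ioc_eq_empty (by exact fun h => absurd hy (not_le.2 h))]
    simp
  · rw [stieltjesExp, E, F, Real.exp_add]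
    congr 1
    have hsum := (summable_L_subset ν hy.le (le_refl _)).hasSum
    have hprod := hsum.rexp
    have heq : (Real.exp ∘ fun r : Set.Ioc (0:ℝ) y => L ν r)
        = fun r : Set.Ioc (0:ℝ) y =>
            (1 + jumpAt (fun x => ν x) r) * Real.exp (-(jumpAt (fun x => ν x) r)) := by
      funext r
      show Real.exp (L ν r) = (1 + J ν r) * Real.exp (-(J ν r))
      rw [L, Real.exp_sub, Real.exp_log (one_add_J_pos ν r), div_eq_mul_inv,
        ← Real.exp_neg]
    rw [heq] at hprod
    exact hprod.tprod_eq

lemma leftLim_scaled (c : ℝ) {x : ℝ} (hx : 0 < x) :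
    Function.leftLim (fun y => c * E ν y) x = c * Function.leftLim (E ν) x := by
  have hb : (𝓝[<] x).NeBot := inferInstance
  exact leftLim_eq_of_tendsto (((E_mono ν).tendsto_leftLim x).const_mul c)

end SEaux

/-- For a nondecreasing right-continuous `ν` (a Stieltjes function,
with induced Borel measure `ν.measure`), any `u₀ ∈ ℝ` and `0 ≤ s ≤ t ≤ T`, the function
`u r = u₀ ⬝ 𝔈(ν)(r) / 𝔈(ν)(s)` satisfies the Lebesgue–Stieltjes integral equation
`u t = u s + ∫_{(s,t]} u(r⁻) dν(r)`. -/
theorem stieltjesExp_solves_linear_integral_equation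
    (T : ℝ) (hT : 0 < T) (ν : StieltjesFunction ℝ)
    (u₀ s t : ℝ) (hs : 0 ≤ s) (hst : s ≤ t) (ht : t ≤ T) :
    u₀ * stieltjesExp (fun x => ν x) t / stieltjesExp (fun x => ν x) s =
      u₀ * stieltjesExp (fun x => ν x) s / stieltjesExp (fun x => ν x) s +
        ∫ r in Set.Ioc s t,
          Function.leftLim
            (fun r' => u₀ * stieltjesExp (fun x => ν x) r' / stieltjesExp (fun x => ν x) s) r
          ∂ν.measure := by
  have hE : ∀ y, stieltjesExp (fun x => ν x) y = SEaux.E ν y := SEaux.stieltjesExp_eq ν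
  have hfun : Set.EqOn
      (fun r => Function.leftLim
        (fun r' => u₀ * stieltjesExp (fun x => ν x) r' / stieltjesExp (fun x => ν x) s) r)
      (fun r => (u₀ / SEaux.E ν s) * Function.leftLim (SEaux.E ν) r) (Set.Ioc s t) := by
    intro r hr
    have h0r : 0 < r := lt_of_le_of_lt hs hr.1
    have hfe : (fun r' => u₀ * stieltjesExp (fun x => ν x) r' / stieltjesExp (fun x => ν x) s)
        = fun r' => (u₀ / SEaux.E ν s) * SEaux.E ν r' := by
      funext r'; rw [hE, hE]; ring
    show Function.leftLim _ r = _
    rw [hfe, SEaux.leftLim_scaled ν _ h0r]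
  rw [setIntegral_congr_fun measurableSet_Ioc hfun, integral_const_mul,
    SEaux.integral_leftLim_eq ν T s t hs hst ht, hE t, hE s]
  have hEs := SEaux.E_pos ν s
  field_simp
  ring
end
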